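/- With notation as above (α a primitive cube root of unity in F_{q²}¹, char ≠ 2, 3), let A₁ = diag(1, α, 1) · A · diag(1, α, 1)⁻¹ where A = [[α, −α², −α/(1+α²)],[0, α, 1],[0, 0, α]] ∈ SU_3(q). Then g = diag(−1, 1, −1) lies in SU_3(q) and satisfies g A₁ g⁻¹ = (Ā₁)⁻¹, where Ā₁ is the entrywise q-th power of A₁. Hence A₁ is conjugate in SU_3(q) to the inverse of its Frobenius conjugate. -/
import Mathlib

set_option maxHeartbeats 1000000 in
theorem stmt17 (q : ℕ) (K : Type*) [Field K] [Fintype K]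
    (hK : Fintype.card K = q ^ 2) (hchar2 : ringChar K ≠ 2) (hchar3 : ringChar K ≠ 3)
    (α : K) (hα : IsPrimitiveRoot α 3) (hnorm : α ^ (q + 1) = 1) :
    let B : Matrix (Fin 3) (Fin 3) K := !![0, 0, 1; 0, 1, 0; 1, 0, 0]
    let A₁ : Matrix (Fin 3) (Fin 3) K :=
      !![α, -α, -α / (1 + α ^ 2); 0, α, α; 0, 0, α]
    let g : Matrix (Fin 3) (Fin 3) K := !![-1, 0, 0; 0, 1, 0; 0, 0, -1]
    (g.transpose * B * (g.map (fun x => x ^ q)) = B ∧ g.det = 1) ∧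
      g * A₁ * g⁻¹ = (A₁.map (fun x => x ^ q))⁻¹ := by
  intro B A₁ g
  -- basic facts about α
  have h3 : α ^ 3 = 1 := hα.pow_eq_one
  have hne1 : α ≠ 1 := hα.ne_one (by norm_num)
  have hα0 : α ≠ 0 := hα.ne_zero (by norm_num)
  have hfac : (α - 1) * (α ^ 2 + α + 1) = 0 := by linear_combination h3
  have hsum : α ^ 2 + α + 1 = 0 :=
    (mul_eq_zero.mp hfac).resolve_left (sub_ne_zero.mpr hne1)
  have hq' : α ^ q = α ^ 2 := by
    have h1 : α ^ q * α = 1 := by rw [← pow_succ]; exact hnorm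
    have h2 : α ^ 2 * α = 1 := by rw [← pow_succ]; exact h3
    exact mul_right_cancel₀ hα0 (h1.trans h2.symm)
  -- q is odd and nonzero
  have hq0 : q ≠ 0 := by
    intro h
    have := Fintype.card_pos (α := K)
    rw [hK, h] at this
    simp at this
  obtain ⟨n, hp, hcard⟩ := FiniteField.card K (ringChar K)
  have hodd : Odd q := by
    rcases Nat.even_or_odd q with he | ho
    · exfalso
      have h2d : (2 : ℕ) ∣ ringChar K := by
        refine Nat.Prime.dvd_of_dvd_pow Nat.prime_two (n := (n : ℕ)) ?_
        rw [← hcard, hK]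
        exact Dvd.dvd.pow he.two_dvd (by norm_num)
      have := (Nat.Prime.eq_one_or_self_of_dvd hp 2 h2d).resolve_left (by norm_num)
      exact hchar2 this.symm
    · exact ho
  have hm1 : (-1 : K) ^ q = -1 := Odd.neg_one_pow hodd
  have hnegq : (-α) ^ q = -α ^ 2 := by rw [Odd.neg_pow hodd, hq']
  have h1a2 : 1 + α ^ 2 = -α := by linear_combination hsum
  have h13 : -α / (1 + α ^ 2) = 1 := by
    rw [h1a2, neg_div_neg_eq, div_self hα0]
  have hA₁ : A₁ = !![α, -α, 1; 0, α, α; 0, 0, α] := by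
    simp only [A₁, h13]
  have hmap : A₁.map (fun x => x ^ q) = !![α^2, -α^2, 1; 0, α^2, α^2; 0, 0, α^2] := by
    rw [hA₁]
    ext i j
    fin_cases i <;> fin_cases j <;>
      simp [Matrix.map_apply, Matrix.vecHead, Matrix.vecTail, hq', hnegq, zero_pow hq0]
  have hgg : g * g = 1 := by
    ext i j
    fin_cases i <;> fin_cases j <;>
      simp [g, Matrix.mul_apply, Fin.sum_univ_three, Matrix.one_apply, Matrix.vecHead, Matrix.vecTail]
  have hginv : g⁻¹ = g := Matrix.inv_eq_right_inv hgg
  refine ⟨⟨?_, ?_⟩, ?_⟩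
  · ext i j
    fin_cases i <;> fin_cases j <;>
      simp [g, B, Matrix.mul_apply, Fin.sum_univ_three, Matrix.transpose_apply,
        Matrix.map_apply, hm1, zero_pow hq0, Matrix.vecHead, Matrix.vecTail]
  · simp [g, Matrix.det_fin_three]
  · rw [hginv, hmap, hA₁]
    refine (Matrix.inv_eq_right_inv ?_).symm
    ext i j
    fin_cases i <;> fin_cases j <;>
      simp [g, Matrix.mul_apply, Fin.sum_univ_three, Matrix.one_apply, Matrix.vecHead, Matrix.vecTail] <;>
      first
        | ring1
        | linear_combination h3
        | linear_combination h3 + hsum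
        | linear_combination -h3
        | linear_combination α * hsum
        | linear_combination h3 - hsum
        | linear_combination -h3 - hsum
        | linear_combination -h3 - hsum + α * hsum
        | linear_combination α * h3
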